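/- Let a, b : ZMod 3 → ℝ³ satisfy Σ_{l} a(l) = 0, Σ_{l} b(l) = 0, and ‖a(x_1) + b(x_2)‖ ≤ 1 for all x_1, x_2 ∈ ZMod 3, and define ρ_{x_1 x_2} = (1/2)(I + (a(x_1)+b(x_2))·σ). For each y ∈ {1,2}, let t_{k|y} ≥ 0 with Σ_{k∈ZMod 3} t_{k|y} = 2 and unit vectors m̂_{k|y} ∈ ℝ³ with Σ_{k} t_{k|y} m̂_{k|y} = 0, and define M_{k|y} = (t_{k|y}/2)(I + m̂_{k|y}·σ). Then the (2,3) POREC success probability of this strategy equals 2/3 − F/12, where F = Σ_{x_1∈ZMod 3} t_{x_1|1}·(a(x_1)·m̂_{x_1|1}) + Σ_{x_2∈ZMod 3} t_{x_2|2}·(b(x_2)·m̂_{x_2|2}). -/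

import Mathlib

open Finset

noncomputable section

/-- Pauli matrix `σ_x`. -/
def sigmaX : Matrix (Fin 2) (Fin 2) ℂ := !![0, 1; 1, 0]

/-- Pauli matrix `σ_y`. -/
def sigmaY : Matrix (Fin 2) (Fin 2) ℂ := !![0, -Complex.I; Complex.I, 0]

/-- Pauli matrix `σ_z`. -/
def sigmaZ : Matrix (Fin 2) (Fin 2) ℂ := !![1, 0; 0, -1]

/-- `v·σ = v₁σ_x + v₂σ_y + v₃σ_z` for `v ∈ ℝ³`. -/
def dotSigma (v : EuclideanSpace ℝ (Fin 3)) : Matrix (Fin 2) (Fin 2) ℂ :=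
  v 0 • sigmaX + v 1 • sigmaY + v 2 • sigmaZ

/-- The qubit state with Bloch vector `v`: `(I + v·σ)/2`. -/
def blochState (v : EuclideanSpace ℝ (Fin 3)) : Matrix (Fin 2) (Fin 2) ℂ :=
  (1 / 2 : ℝ) • ((1 : Matrix (Fin 2) (Fin 2) ℂ) + dotSigma v)

/-- The qubit POVM element `(t/2)(I + m̂·σ)`. -/
def povmElt (t : ℝ) (mhat : EuclideanSpace ℝ (Fin 3)) : Matrix (Fin 2) (Fin 2) ℂ :=
  (t / 2 : ℝ) • ((1 : Matrix (Fin 2) (Fin 2) ℂ) + dotSigma mhat)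

/-- Key trace identity: `Tr(ρ_v M) = (t/2)(1 + v·m̂)`. -/
lemma trace_key (v m : EuclideanSpace ℝ (Fin 3)) (t : ℝ) :
    (blochState v * povmElt t m).trace.re = t / 2 * (1 + (inner ℝ v m : ℝ)) := by
  have hinner : (inner ℝ v m : ℝ) = v 0 * m 0 + v 1 * m 1 + v 2 * m 2 := by
    simp [PiLp.inner_apply, Fin.sum_univ_three, mul_comm]
  simp [blochState, povmElt, dotSigma, sigmaX, sigmaY, sigmaZ, Matrix.trace,
    Matrix.mul_apply, Fin.sum_univ_two, Matrix.one_apply, Matrix.smul_apply,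
    Complex.add_re, Complex.mul_re, hinner]
  ring

lemma zmod3_sum {M : Type*} [AddCommMonoid M] (f : ZMod 3 → M) : ∑ k, f k = f 0 + f 1 + f 2 :=
  Fin.sum_univ_three f

/-- **Reduction of the (2,3) POREC success probability to the linear functional `F`.**
For additive zero-sum Bloch preparations `ρ_{x₁x₂} = (I + (a(x₁)+b(x₂))·σ)/2` within the
Bloch ball and three-outcome qubit POVMs `M_{k|y} = (t_{k|y}/2)(I + m̂_{k|y}·σ)`, the POREC
success probability equals `2/3 − F/12` with
`F = Σ_{x₁} t_{x₁|1} (a(x₁)·m̂_{x₁|1}) + Σ_{x₂} t_{x₂|2} (b(x₂)·m̂_{x₂|2})`. -/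
theorem porec23_success_eq_F
    (a b : ZMod 3 → EuclideanSpace ℝ (Fin 3))
    (ha_sum : ∑ l : ZMod 3, a l = 0) (hb_sum : ∑ l : ZMod 3, b l = 0)
    (hball : ∀ x₁ x₂ : ZMod 3, ‖a x₁ + b x₂‖ ≤ 1)
    (t₁ t₂ : ZMod 3 → ℝ)
    (ht₁_nonneg : ∀ k, 0 ≤ t₁ k) (ht₂_nonneg : ∀ k, 0 ≤ t₂ k)
    (ht₁_sum : ∑ k : ZMod 3, t₁ k = 2) (ht₂_sum : ∑ k : ZMod 3, t₂ k = 2)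
    (mhat₁ mhat₂ : ZMod 3 → EuclideanSpace ℝ (Fin 3))
    (hm₁_unit : ∀ k, ‖mhat₁ k‖ = 1) (hm₂_unit : ∀ k, ‖mhat₂ k‖ = 1)
    (hm₁_sum : ∑ k : ZMod 3, t₁ k • mhat₁ k = 0)
    (hm₂_sum : ∑ k : ZMod 3, t₂ k • mhat₂ k = 0) :
    (1 / 18 : ℝ) *
        ∑ x : ZMod 3 × ZMod 3,
          ((∑ c ∈ Finset.univ.filter (fun c => c ≠ x.1),
              ((blochState (a x.1 + b x.2) * povmElt (t₁ c) (mhat₁ c)).trace.re)) +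
           (∑ c ∈ Finset.univ.filter (fun c => c ≠ x.2),
              ((blochState (a x.1 + b x.2) * povmElt (t₂ c) (mhat₂ c)).trace.re)))
      = 2 / 3 -
        ((∑ x₁ : ZMod 3, t₁ x₁ * (inner ℝ (a x₁) (mhat₁ x₁) : ℝ)) +
         (∑ x₂ : ZMod 3, t₂ x₂ * (inner ℝ (b x₂) (mhat₂ x₂) : ℝ))) / 12 := by
  -- zero-sum facts in inner-product form
  have ha0 : ∀ m : EuclideanSpace ℝ (Fin 3), ∑ l : ZMod 3, (inner ℝ (a l) m : ℝ) = 0 := by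
    intro m; rw [← sum_inner, ha_sum, inner_zero_left]
  have hb0 : ∀ m : EuclideanSpace ℝ (Fin 3), ∑ l : ZMod 3, (inner ℝ (b l) m : ℝ) = 0 := by
    intro m; rw [← sum_inner, hb_sum, inner_zero_left]
  have hm₁0 : ∀ v : EuclideanSpace ℝ (Fin 3), ∑ c : ZMod 3, t₁ c * (inner ℝ v (mhat₁ c) : ℝ) = 0 := by
    intro v
    have := congrArg (fun w => (inner ℝ v w : ℝ)) hm₁_sum
    simpa [inner_sum, real_inner_smul_right, PiLp.inner_apply, Finset.mul_sum,
      mul_left_comm, mul_assoc] using this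
  have hm₂0 : ∀ v : EuclideanSpace ℝ (Fin 3), ∑ c : ZMod 3, t₂ c * (inner ℝ v (mhat₂ c) : ℝ) = 0 := by
    intro v
    have := congrArg (fun w => (inner ℝ v w : ℝ)) hm₂_sum
    simpa [inner_sum, real_inner_smul_right, PiLp.inner_apply, Finset.mul_sum,
      mul_left_comm, mul_assoc] using this
  -- per-pair reduction
  have hterm : ∀ x : ZMod 3 × ZMod 3,
      ((∑ c ∈ Finset.univ.filter (fun c => c ≠ x.1),
          ((blochState (a x.1 + b x.2) * povmElt (t₁ c) (mhat₁ c)).trace.re)) +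
       (∑ c ∈ Finset.univ.filter (fun c => c ≠ x.2),
          ((blochState (a x.1 + b x.2) * povmElt (t₂ c) (mhat₂ c)).trace.re)))
      = 2 - t₁ x.1 / 2 * (1 + (inner ℝ (a x.1) (mhat₁ x.1) : ℝ) + (inner ℝ (b x.2) (mhat₁ x.1) : ℝ))
          - t₂ x.2 / 2 * (1 + (inner ℝ (a x.1) (mhat₂ x.2) : ℝ) + (inner ℝ (b x.2) (mhat₂ x.2) : ℝ)) := by
    intro x
    rw [Finset.filter_ne' Finset.univ x.1, Finset.filter_ne' Finset.univ x.2,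
      Finset.sum_erase_eq_sub (Finset.mem_univ x.1),
      Finset.sum_erase_eq_sub (Finset.mem_univ x.2)]
    simp only [trace_key]
    have h₁ : ∑ c : ZMod 3, t₁ c / 2 * (1 + (inner ℝ (a x.1 + b x.2) (mhat₁ c) : ℝ)) = 1 := by
      have : ∀ c : ZMod 3, t₁ c / 2 * (1 + (inner ℝ (a x.1 + b x.2) (mhat₁ c) : ℝ))
          = t₁ c / 2 + (t₁ c * (inner ℝ (a x.1 + b x.2) (mhat₁ c) : ℝ)) / 2 := fun c => by ring
      rw [Finset.sum_congr rfl fun c _ => this c, Finset.sum_add_distrib,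
        ← Finset.sum_div, ← Finset.sum_div, ht₁_sum, hm₁0]
      norm_num
    have h₂ : ∑ c : ZMod 3, t₂ c / 2 * (1 + (inner ℝ (a x.1 + b x.2) (mhat₂ c) : ℝ)) = 1 := by
      have : ∀ c : ZMod 3, t₂ c / 2 * (1 + (inner ℝ (a x.1 + b x.2) (mhat₂ c) : ℝ))
          = t₂ c / 2 + (t₂ c * (inner ℝ (a x.1 + b x.2) (mhat₂ c) : ℝ)) / 2 := fun c => by ring
      rw [Finset.sum_congr rfl fun c _ => this c, Finset.sum_add_distrib,
        ← Finset.sum_div, ← Finset.sum_div, ht₂_sum, hm₂0]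
      norm_num
    rw [h₁, h₂]
    simp only [inner_add_left]
    ring
  rw [Finset.sum_congr rfl fun x _ => hterm x, Fintype.sum_prod_type]
  simp only [zmod3_sum]
  have e1 := ha0 (mhat₂ 0); have e2 := ha0 (mhat₂ 1); have e3 := ha0 (mhat₂ 2)
  have e4 := hb0 (mhat₁ 0); have e5 := hb0 (mhat₁ 1); have e6 := hb0 (mhat₁ 2)
  rw [zmod3_sum] at e1 e2 e3 e4 e5 e6 ht₁_sum ht₂_sum
  linear_combination (-(1 : ℝ)/12) * ht₁_sum + (-(1 : ℝ)/12) * ht₂_sum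
    + (-(t₁ 0)/36) * e4 + (-(t₁ 1)/36) * e5 + (-(t₁ 2)/36) * e6
    + (-(t₂ 0)/36) * e1 + (-(t₂ 1)/36) * e2 + (-(t₂ 2)/36) * e3

end
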